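/- arXiv:1704.01725 — 2 statements merged into one kernel-verified Lean document; each statement's English description precedes it below -/
import Mathlib

section
/- Let p : F → E be a functor, f : ξ → ξ' a cartesian morphism lying over φ : S → S', and ρ : G → Aut_S(ξ) a group homomorphism. Assume the kernel A = Aut_ξ(ξ') of the restriction homomorphism Aut_{S'}(ξ') → Aut_S(ξ) is abelian. Then there exists a group homomorphism ρ' : G → Aut_{S'}(ξ') with res ∘ ρ' = ρ (an extension of the G-action from ξ to ξ') if and only if the following two conditions hold: (1) for every σ ∈ G there exists σ' ∈ Aut_{S'}(ξ') with res(σ') = ρ(σ); and (2) for some (equivalently, for every) choice of a function Φ : G → Aut_{S'}(ξ') with res(Φ(σ)) = ρ(σ) for all σ, the function c : G × G → A defined by c(σ,τ) = Φ(σ) ∘ Φ(τ) ∘ Φ(στ)⁻¹ is a 2-coboundary, i.e. there exists b : G → A such that c(σ,τ) = (Φ(σ) ∘ b(τ) ∘ Φ(σ)⁻¹) ∘ b(στ)⁻¹ ∘ b(σ) for all σ, τ ∈ G. -/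
open CategoryTheory

/-- A morphism `f : ξ ⟶ ξ'` is cartesian for the functor `p : F ⥤ E` if for every
object `ζ` lying over `S = p.obj ξ`, composition with `f` gives a bijection between
morphisms `ζ ⟶ ξ` lying over `𝟙 S` and morphisms `ζ ⟶ ξ'` lying over `φ = p.map f`. -/
def IsCartesianMor {F E : Type*} [Category F] [Category E] (p : F ⥤ E)
    {ξ ξ' : F} (f : ξ ⟶ ξ') : Prop :=
  ∀ (ζ : F) (e : p.obj ζ = p.obj ξ),
    Function.Bijective (fun h : {h : ζ ⟶ ξ // p.map h = eqToHom e} =>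
      (⟨h.1 ≫ f, by rw [p.map_comp, h.2]⟩ :
        {g : ζ ⟶ ξ' // p.map g = eqToHom e ≫ p.map f}))

/-- The subgroup of `Aut ξ` consisting of automorphisms lying over the identity
of `S = p.obj ξ`. -/
def vertAut {F E : Type*} [Category F] [Category E] (p : F ⥤ E) (ξ : F) :
    Subgroup (Aut ξ) where
  carrier := {σ | p.map σ.hom = 𝟙 (p.obj ξ)}
  one_mem' := p.map_id ξ
  mul_mem' := by
    intro σ τ hσ hτ
    show p.map (τ.hom ≫ σ.hom) = 𝟙 _
    rw [p.map_comp, hσ, hτ, Category.id_comp]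
  inv_mem' := by
    intro σ hσ
    show p.map σ.symm.hom = 𝟙 _
    have h : p.map σ.hom = 𝟙 _ := hσ
    calc p.map σ.inv = p.map σ.hom ≫ p.map σ.inv := by rw [h, Category.id_comp]
      _ = p.map (σ.hom ≫ σ.inv) := (p.map_comp _ _).symm
      _ = 𝟙 _ := by exact (congrArg p.map (Iso.hom_inv_id _)).trans (p.map_id ξ)

/-- Theorem 1.3: assume the kernel `A = Aut_ξ(ξ')` of the restriction homomorphism
`res : Aut_{S'}(ξ') → Aut_S(ξ)` is abelian.  A group homomorphism `ρ : G → Aut_S(ξ)`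
lifts to a homomorphism `ρ' : G → Aut_{S'}(ξ')` with `res ∘ ρ' = ρ` if and only if
(1) every `ρ(σ)` is in the image of `res`, and (2) for every set-theoretic lift
`Φ : G → Aut_{S'}(ξ')` of `ρ`, the `2`-cocycle `c(σ,τ) = Φ(σ)Φ(τ)Φ(στ)⁻¹` is a
`2`-coboundary. -/
theorem extension_of_group_action {F E : Type*} [Category F] [Category E] (p : F ⥤ E)
    {ξ ξ' : F} (f : ξ ⟶ ξ') (hf : IsCartesianMor p f)
    {G : Type*} [Group G] (ρ : G →* vertAut p ξ)
    (res : vertAut p ξ' →* vertAut p ξ)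
    (hres : ∀ σ' : vertAut p ξ',
      f ≫ (σ' : Aut ξ').hom = ((res σ' : Aut ξ)).hom ≫ f)
    (hA : ∀ a b : vertAut p ξ', a ∈ res.ker → b ∈ res.ker → a * b = b * a) :
    (∃ ρ' : G →* vertAut p ξ', res.comp ρ' = ρ) ↔
      ((∀ σ : G, ρ σ ∈ res.range) ∧
        ∀ Φ : G → vertAut p ξ', (∀ σ : G, res (Φ σ) = ρ σ) →
          ∃ b : G → vertAut p ξ', (∀ σ : G, b σ ∈ res.ker) ∧
            ∀ σ τ : G, Φ σ * Φ τ * (Φ (σ * τ))⁻¹ =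
              (Φ σ * b τ * (Φ σ)⁻¹) * (b (σ * τ))⁻¹ * b σ) := by
  constructor
  · rintro ⟨ρ', hρ'⟩
    have hρ'' : ∀ σ, res (ρ' σ) = ρ σ := fun σ => DFunLike.congr_fun hρ' σ
    refine ⟨fun σ => ⟨ρ' σ, hρ'' σ⟩, ?_⟩
    intro Φ hΦ
    have hker : ∀ σ, Φ σ * (ρ' σ)⁻¹ ∈ res.ker := by
      intro σ
      simp [MonoidHom.mem_ker, hΦ σ, hρ'' σ]
    refine ⟨fun σ => Φ σ * (ρ' σ)⁻¹, hker, ?_⟩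
    intro σ τ
    have hc : (Φ σ * (ρ' σ)⁻¹) * (Φ (σ * τ) * (ρ' (σ * τ))⁻¹)⁻¹
        = (Φ (σ * τ) * (ρ' (σ * τ))⁻¹)⁻¹ * (Φ σ * (ρ' σ)⁻¹) :=
      hA _ _ (hker σ) (res.ker.inv_mem (hker (σ * τ)))
    have hm : ρ' (σ * τ) = ρ' σ * ρ' τ := map_mul ρ' σ τ
    have key : (Φ σ * (ρ' σ)⁻¹)⁻¹ * (Φ (σ * τ) * (ρ' (σ * τ))⁻¹)⁻¹ *
        (Φ σ * (ρ' σ)⁻¹) = (Φ (σ * τ) * (ρ' (σ * τ))⁻¹)⁻¹ := by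
      rw [mul_assoc, ← hc]
      group
    calc Φ σ * Φ τ * (Φ (σ * τ))⁻¹
        = (Φ σ * (ρ' σ)⁻¹) * (ρ' σ * (Φ τ * (ρ' τ)⁻¹) * (ρ' σ)⁻¹) *
            ((Φ (σ * τ) * (ρ' (σ * τ))⁻¹)⁻¹) := by
          rw [hm]; group
      _ = (Φ σ * (ρ' σ)⁻¹) * (ρ' σ * (Φ τ * (ρ' τ)⁻¹) * (ρ' σ)⁻¹) *
            ((Φ σ * (ρ' σ)⁻¹)⁻¹ * (Φ (σ * τ) * (ρ' (σ * τ))⁻¹)⁻¹ *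
              (Φ σ * (ρ' σ)⁻¹)) := by rw [key]
      _ = (Φ σ * (Φ τ * (ρ' τ)⁻¹) * (Φ σ)⁻¹) * (Φ (σ * τ) * (ρ' (σ * τ))⁻¹)⁻¹ *
            (Φ σ * (ρ' σ)⁻¹) := by group
  · rintro ⟨h1, h2⟩
    choose Φ hΦ using h1
    obtain ⟨b, hbker, hb⟩ := h2 Φ hΦ
    have hmul : ∀ σ τ : G, (fun σ => (b σ)⁻¹ * Φ σ) (σ * τ) =
        (fun σ => (b σ)⁻¹ * Φ σ) σ * (fun σ => (b σ)⁻¹ * Φ σ) τ := by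
      intro σ τ
      have h := hb σ τ
      have h' : Φ σ * Φ τ = (Φ σ * b τ * (Φ σ)⁻¹) * (b (σ * τ))⁻¹ * b σ * Φ (σ * τ) := by
        rw [← h]; group
      have hc2 : b σ * (b (σ * τ))⁻¹ = (b (σ * τ))⁻¹ * b σ :=
        hA _ _ (hbker σ) (res.ker.inv_mem (hbker (σ * τ)))
      have key : (b σ)⁻¹ * (b (σ * τ))⁻¹ * b σ = (b (σ * τ))⁻¹ := by
        rw [mul_assoc, ← hc2]; group
      show (b (σ * τ))⁻¹ * Φ (σ * τ) = ((b σ)⁻¹ * Φ σ) * ((b τ)⁻¹ * Φ τ)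
      calc (b (σ * τ))⁻¹ * Φ (σ * τ)
          = ((b σ)⁻¹ * (b (σ * τ))⁻¹ * b σ) * Φ (σ * τ) := by rw [key]
        _ = (b σ)⁻¹ * (Φ σ * b τ * (Φ σ)⁻¹)⁻¹ *
              ((Φ σ * b τ * (Φ σ)⁻¹) * (b (σ * τ))⁻¹ * b σ * Φ (σ * τ)) := by group
        _ = (b σ)⁻¹ * (Φ σ * b τ * (Φ σ)⁻¹)⁻¹ * (Φ σ * Φ τ) := by rw [← h']
        _ = ((b σ)⁻¹ * Φ σ) * ((b τ)⁻¹ * Φ τ) := by group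
    refine ⟨MonoidHom.mk' (fun σ => (b σ)⁻¹ * Φ σ) hmul, ?_⟩
    ext σ
    have hb1 : res (b σ) = 1 := hbker σ
    simp [MonoidHom.mk', hb1, hΦ σ]
end

section
/- Let k be a field of characteristic p > 0, G a finite group, P ⊆ G a Sylow p-subgroup, and V a k-vector space on which G acts by k-linear automorphisms such that V, regarded as a module over the group algebra k[P] via the restricted P-action, is a free k[P]-module. Let L be a nonempty V-torsor with group of operators G. Then L has a G-fixed point. -/
/-- A torsor `L` under an additive group `V` with a group of operators `G`: the
group `G` acts on the left on `V` by additive automorphisms and on the set `L`,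
`L` carries a simply transitive right `V`-action, and the actions are compatible:
`σ • (ξ · v) = (σ • ξ) · (σ • v)`. -/
structure AddTorsorWithOperators (G V L : Type*) [Group G] [AddGroup V]
    [DistribMulAction G V] [MulAction G L] where
  /-- the right action of `V` on `L`, written `ξ · v` -/
  act : L → V → L
  act_zero : ∀ ξ : L, act ξ 0 = ξ
  act_add : ∀ (ξ : L) (v w : V), act (act ξ v) w = act ξ (v + w)
  bijective : ∀ ξ : L, Function.Bijective (act ξ)
  compat : ∀ (σ : G) (ξ : L) (v : V), σ • act ξ v = act (σ • ξ) (σ • v)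

/-- The `k`-linear `G`-action on `V`, restricted to a subgroup `P ≤ G`, viewed as a
representation of `P` on `V`. -/
def restrictedRep {k : Type*} [Field k] {G : Type*} [Group G] (P : Subgroup G)
    {V : Type*} [AddCommGroup V] [Module k V] [DistribMulAction G V]
    [SMulCommClass G k V] : Representation k P V :=
  (DistribMulAction.toModuleEnd k V).comp P.subtype

/-- Any 1-cocycle of `P` valued in a free `k[P]`-module is a coboundary. -/
theorem coboundary_of_free {k : Type*} [Field k] {G : Type*} [Group G] (P : Subgroup G)
    [Fintype P] {V : Type*} [AddCommGroup V] [Module k V] [DistribMulAction G V]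
    [SMulCommClass G k V]
    (hfree : Module.Free (MonoidAlgebra k P) (restrictedRep (k := k) P (V := V)).asModule)
    (c : P → V) (hc : ∀ σ τ : P, c (σ * τ) = c σ + (σ : G) • c τ) :
    ∃ w : V, ∀ π : P, c π = w - (π : G) • w := by
  classical
  set ρ := restrictedRep (k := k) P (V := V) with hρ
  set ι := Module.Free.ChooseBasisIndex (MonoidAlgebra k P) ρ.asModule with hι
  let b : Module.Basis ι (MonoidAlgebra k P) ρ.asModule := Module.Free.chooseBasis _ _
  let e : ρ.asModule ≃ₗ[MonoidAlgebra k P] (ι →₀ MonoidAlgebra k P) := b.repr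
  let c' : P → (ι →₀ MonoidAlgebra k P) := fun π => e (ρ.asModuleEquiv.symm (c π))
  have hrho : ∀ (σ : P) (v : V), ρ σ v = (σ : G) • v := fun σ v => rfl
  have hc' : ∀ σ τ : P, c' (σ * τ) = c' σ + MonoidAlgebra.of k P σ • c' τ := by
    intro σ τ
    simp only [c', hc σ τ, map_add]
    congr 1
    rw [← hrho σ (c τ), ρ.asModuleEquiv_symm_map_rho, map_smul]
  let E : P → (ι →₀ MonoidAlgebra k P) →+ (ι →₀ MonoidAlgebra k P) := fun τ =>
    Finsupp.mapRange.addMonoidHom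
      ((MonoidAlgebra.singleAddHom (τ : P)).comp
        ((Finsupp.applyAddHom (τ : P)).comp MonoidAlgebra.coeffAddEquiv.toAddMonoidHom))
  let u' : ι →₀ MonoidAlgebra k P := ∑ τ : P, E τ (c' τ)
  have hu'apply : ∀ (i : ι) (g : P), (u' i).coeff g = (c' g i).coeff g := by
    intro i g
    have : u' i = ∑ τ : P, (E τ (c' τ)) i := Finsupp.finset_sum_apply _ _ _
    rw [this, MonoidAlgebra.coeff_sum, Finsupp.finset_sum_apply]
    have hterm : ∀ τ : P, ((E τ (c' τ)) i : MonoidAlgebra k P).coeff g =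
        if τ = g then (c' τ i).coeff τ else 0 := by
      intro τ
      show (MonoidAlgebra.single τ ((c' τ i).coeff τ)).coeff g = _
      exact Finsupp.single_apply
    simp only [hterm]
    simp
  have key : ∀ σ : P, c' σ = u' - MonoidAlgebra.of k P σ • u' := by
    intro σ
    ext i g
    have hrel := hc' σ (σ⁻¹ * g)
    rw [mul_inv_cancel_left] at hrel
    have hrel' : (c' g i).coeff g = (c' σ i).coeff g + (c' (σ⁻¹ * g) i).coeff (σ⁻¹ * g) := by
      have h1 : (c' g) i = (c' σ) i + (MonoidAlgebra.of k P σ • c' (σ⁻¹ * g)) i := by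
        rw [hrel]; rfl
      have h2 : ((MonoidAlgebra.of k P σ • c' (σ⁻¹ * g)) i : MonoidAlgebra k P).coeff g =
          (c' (σ⁻¹ * g) i).coeff (σ⁻¹ * g) := by
        rw [Finsupp.smul_apply, MonoidAlgebra.of_apply, smul_eq_mul,
          MonoidAlgebra.coeff_single_mul_apply, one_mul]
      calc (c' g i).coeff g = ((c' σ) i + (MonoidAlgebra.of k P σ • c' (σ⁻¹ * g)) i).coeff g := by
            rw [← h1]
        _ = (c' σ i).coeff g + (c' (σ⁻¹ * g) i).coeff (σ⁻¹ * g) := by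
            rw [MonoidAlgebra.coeff_add, Finsupp.add_apply, h2]
    have hL : ((u' - MonoidAlgebra.of k P σ • u') i : MonoidAlgebra k P).coeff g =
        (c' g i).coeff g - (c' (σ⁻¹ * g) i).coeff (σ⁻¹ * g) := by
      rw [Finsupp.sub_apply, MonoidAlgebra.coeff_sub, Finsupp.sub_apply, hu'apply i g]
      congr 1
      rw [Finsupp.smul_apply, MonoidAlgebra.of_apply, smul_eq_mul,
        MonoidAlgebra.coeff_single_mul_apply, one_mul, hu'apply i (σ⁻¹ * g)]
    rw [hL, hrel']
    ring
  refine ⟨ρ.asModuleEquiv (e.symm u'), fun π => ?_⟩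
  have h := key π
  have hback : ∀ m : ρ.asModule, ρ.asModuleEquiv
      ((MonoidAlgebra.of k P π : MonoidAlgebra k P) • m) =
      (π : G) • ρ.asModuleEquiv m := by
    intro m
    rw [ρ.asModuleEquiv_map_smul]
    have : ρ.asAlgebraHom (MonoidAlgebra.of k P π) = ρ π := by
      simp [Representation.asAlgebraHom_single_one]
    rw [this, hrho]
  calc c π = ρ.asModuleEquiv (e.symm (c' π)) := by
        simp [c']
    _ = ρ.asModuleEquiv (e.symm (u' - MonoidAlgebra.of k P π • u')) := by rw [h]
    _ = ρ.asModuleEquiv (e.symm u') - (π : G) • ρ.asModuleEquiv (e.symm u') := by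
        rw [map_sub, map_sub, LinearEquiv.map_smul, hback]

/-- Let `k` be a field of characteristic `p > 0`, `G` a finite group acting
`k`-linearly on a `k`-vector space `V`, and `P` a Sylow `p`-subgroup of `G`.  If `V`
is free as a module over the group algebra `k[P]` (via the restricted `P`-action),
then any nonempty `V`-torsor `L` with group of operators `G` has a `G`-fixed point. -/
theorem fixed_point_of_free_kP_module {p : ℕ} [Fact p.Prime]
    {k : Type*} [Field k] [CharP k p]
    {G : Type*} [Group G] [Finite G] (P : Sylow p G)
    {V L : Type*} [AddCommGroup V] [Module k V] [DistribMulAction G V]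
    [SMulCommClass G k V] [MulAction G L] [Nonempty L]
    (hfree : Module.Free (MonoidAlgebra k (P : Subgroup G))
      (restrictedRep (k := k) (P : Subgroup G) (V := V)).asModule)
    (tor : AddTorsorWithOperators G V L) :
    ∃ η : L, ∀ σ : G, σ • η = η := by
  classical
  obtain ⟨ξ₀⟩ := (inferInstance : Nonempty L)
  -- the difference function of the torsor
  let dfun : L → L → V := fun ξ η => (Equiv.ofBijective _ (tor.bijective ξ)).symm η
  have hd : ∀ ξ η, tor.act ξ (dfun ξ η) = η := fun ξ η =>
    (Equiv.ofBijective _ (tor.bijective ξ)).apply_symm_apply η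
  have hinj : ∀ (ξ : L) (v v' : V), tor.act ξ v = tor.act ξ v' → v = v' :=
    fun ξ v v' h => (tor.bijective ξ).1 h
  haveI : Fintype (P : Subgroup G) := Fintype.ofFinite _
  -- Step 1: construct a `P`-fixed point using freeness
  set c₁ : ↥(P : Subgroup G) → V := fun π => dfun ξ₀ ((π : G) • ξ₀) with hc₁def
  have l1 : ∀ x : ↥(P : Subgroup G), tor.act ξ₀ (c₁ x) = (x : G) • ξ₀ := fun x => hd ξ₀ _
  have hc₁ : ∀ σ τ : ↥(P : Subgroup G), c₁ (σ * τ) = c₁ σ + (σ : G) • c₁ τ := by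
    intro σ τ
    apply hinj ξ₀
    rw [l1, ← tor.act_add, l1 σ, ← tor.compat, l1 τ, ← mul_smul]
    rfl
  obtain ⟨w, hw⟩ := coboundary_of_free (P : Subgroup G) hfree c₁ hc₁
  set η₀ : L := tor.act ξ₀ w with hη₀def
  have hη₀ : ∀ π : ↥(P : Subgroup G), (π : G) • η₀ = η₀ := by
    intro π
    rw [hη₀def, tor.compat, ← l1 π, tor.act_add, hw π]
    congr 1
    abel
  -- Step 2: averaging over `G ⧸ P`
  set c₂ : G → V := fun σ => dfun η₀ (σ • η₀) with hc₂def
  have l2 : ∀ x : G, tor.act η₀ (c₂ x) = x • η₀ := fun x => hd η₀ _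
  have hc₂ : ∀ σ τ : G, c₂ (σ * τ) = c₂ σ + σ • c₂ τ := by
    intro σ τ
    apply hinj η₀
    rw [l2, ← tor.act_add, l2 σ, ← tor.compat, l2 τ, ← mul_smul]
  have h0 : ∀ π : G, π ∈ (P : Subgroup G) → c₂ π = 0 := by
    intro π hπ
    apply hinj η₀
    rw [l2, tor.act_zero]
    exact hη₀ ⟨π, hπ⟩
  have hcoset : ∀ (a b : G), (QuotientGroup.leftRel (P : Subgroup G)) a b → c₂ a = c₂ b := by
    intro a b hab
    have h := (QuotientGroup.leftRel_apply).mp hab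
    have : b = a * (a⁻¹ * b) := by group
    rw [this, hc₂, h0 _ h, smul_zero, add_zero]
  let cbar : G ⧸ (P : Subgroup G) → V := Quotient.lift c₂ hcoset
  have hbar : ∀ σ : G, cbar (QuotientGroup.mk σ) = c₂ σ := fun σ => rfl
  haveI : Fintype (G ⧸ (P : Subgroup G)) := Fintype.ofFinite _
  set S : V := ∑ x : G ⧸ (P : Subgroup G), cbar x with hSdef
  have hshift : ∀ (τ : G) (x : G ⧸ (P : Subgroup G)), cbar (τ • x) = c₂ τ + τ • cbar x := by
    intro τ x
    induction x using Quotient.inductionOn with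
    | h σ =>
      have : τ • (QuotientGroup.mk σ : G ⧸ (P : Subgroup G)) = QuotientGroup.mk (τ * σ) :=
        rfl
      rw [this, hbar, hbar, hc₂]
  set n : ℕ := Fintype.card (G ⧸ (P : Subgroup G)) with hndef
  haveI : (P : Subgroup G).FiniteIndex := ⟨Subgroup.index_ne_zero_of_finite⟩
  have hpn : ¬ p ∣ n := by
    have h := Sylow.not_dvd_index P
    have : (P : Subgroup G).index = n := by
      rw [Subgroup.index, Nat.card_eq_fintype_card]
    rwa [this] at h
  have hnk : (n : k) ≠ 0 := fun h => hpn ((CharP.cast_eq_zero_iff k p n).mp h)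
  have hSeq : ∀ τ : G, S - τ • S = (n : k) • c₂ τ := by
    intro τ
    have h1 : S = ∑ x : G ⧸ (P : Subgroup G), cbar (τ • x) :=
      (Equiv.sum_comp (MulAction.toPerm τ) cbar).symm
    have h2 : ∑ x : G ⧸ (P : Subgroup G), cbar (τ • x) = n • c₂ τ + τ • S := by
      simp only [hshift τ]
      rw [Finset.sum_add_distrib, Finset.sum_const, ← Finset.smul_sum, Finset.card_univ]
    have : S = n • c₂ τ + τ • S := h1.trans h2
    rw [Nat.cast_smul_eq_nsmul k n (c₂ τ)]
    nth_rewrite 1 [this]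
    abel
  set u : V := (n : k)⁻¹ • S with hu
  have hcu : ∀ σ : G, c₂ σ + σ • u = u := by
    intro σ
    have hσu : σ • u = (n : k)⁻¹ • (σ • S) := smul_comm _ _ _
    have : c₂ σ = u - σ • u := by
      rw [hσu, hu, ← smul_sub, hSeq σ, ← smul_assoc, smul_eq_mul,
        inv_mul_cancel₀ hnk, one_smul]
    rw [this]; abel
  refine ⟨tor.act η₀ u, fun σ => ?_⟩
  rw [tor.compat, ← l2 σ, tor.act_add, hcu σ]
end
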